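/- arXiv:2005.10058 — 3 statements merged into one kernel-verified Lean document; each statement's English description precedes it below -/
import Mathlib

section
/- Every tensor term expression is congruent to a normal term expression, i.e., one containing no bound indices. -/
set_option autoImplicit false

namespace TensorPaper

/-- Tensor term expressions over a terminal alphabet `T` and index set `ι`.
`elem w i j` is the word `w` with lower (left) index `i` and upper (right) index `j`;
`loop w` is a closed loop; `one` is the empty product. -/
inductive Expr (T ι : Type) : Type
  | one : Expr T ι
  | elem : List T → ι → ι → Expr T ι
  | loop : List T → Expr T ι
  | mul : Expr T ι → Expr T ι → Expr T ι

namespace Expr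

variable {T ι : Type}

def rename (f : ι → ι) : Expr T ι → Expr T ι
  | one => one
  | elem w i j => elem w (f i) (f j)
  | loop w => loop w
  | mul t s => mul (rename f t) (rename f s)

variable [DecidableEq ι]

/-- number of occurrences of `k` as an upper index -/
def supCount : Expr T ι → ι → ℕ
  | one, _ => 0
  | elem _ _ j, k => if j = k then 1 else 0
  | loop _, _ => 0
  | mul t s, k => supCount t k + supCount s k

/-- number of occurrences of `k` as a lower index -/
def subCount : Expr T ι → ι → ℕ
  | one, _ => 0
  | elem _ i _, k => if i = k then 1 else 0
  | loop _, _ => 0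
  | mul t s, k => subCount t k + subCount s k

/-- each index occurs at most once as an upper and at most once as a lower index -/
def WellFormed (t : Expr T ι) : Prop := ∀ k, supCount t k ≤ 1 ∧ subCount t k ≤ 1

def Occurs (t : Expr T ι) (k : ι) : Prop := supCount t k ≠ 0 ∨ subCount t k ≠ 0

/-- free upper indices -/
def FSup (t : Expr T ι) : Set ι := {k | supCount t k = 1 ∧ subCount t k = 0}

/-- free lower indices -/
def FSub (t : Expr T ι) : Set ι := {k | subCount t k = 1 ∧ supCount t k = 0}

/-- a term expression is normal if it has no bound indices -/
def Normal (t : Expr T ι) : Prop := ∀ k, supCount t k = 0 ∨ subCount t k = 0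

def LoopFree : Expr T ι → Prop
  | one => True
  | elem _ i j => i ≠ j
  | loop _ => False
  | mul t s => LoopFree t ∧ LoopFree s

end Expr

/-- Congruence of tensor term expressions. -/
inductive Cong {T ι : Type} : Expr T ι → Expr T ι → Prop
  | refl (t : Expr T ι) : Cong t t
  | symm {t s : Expr T ι} : Cong t s → Cong s t
  | trans {t s u : Expr T ι} : Cong t s → Cong s u → Cong t u
  | mul_congr {t t' s s' : Expr T ι} : Cong t t' → Cong s s' →
      Cong (.mul t s) (.mul t' s')
  | assoc (t s u : Expr T ι) : Cong (.mul (.mul t s) u) (.mul t (.mul s u))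
  | comm (t s : Expr T ι) : Cong (.mul t s) (.mul s t)
  | one_mul (t : Expr T ι) : Cong (.mul .one t) t
  | concat (u v : List T) (i j k : ι) : i ≠ j → j ≠ k →
      Cong (.mul (.elem u i j) (.elem v j k)) (.elem (u ++ v) i k)
  | loopify (u : List T) (i : ι) : Cong (.elem u i i) (.loop u)
  | rot (a : T) (w : List T) : Cong (.loop (a :: w)) (.loop (w ++ [a]))

/-- the Kronecker delta `δ_i^j` (empty word with lower index `i` and upper index `j`) -/
def delta {T ι : Type} (i j : ι) : Expr T ι := .elem [] i j

/-- product of Kronecker deltas pairing corresponding lower and upper indices -/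
def deltasLU {T ι : Type} (lowers uppers : List ι) : Expr T ι :=
  (lowers.zip uppers).foldr (fun p acc => .mul (.elem [] p.1 p.2) acc) .one

/-- a tensor term is regular if it is congruent to a normal loop-free product of
elementary regular expressions with no repeated index -/
def Regular {T ι : Type} [DecidableEq ι] (t : Expr T ι) : Prop :=
  ∃ s : Expr T ι, Cong t s ∧ s.WellFormed ∧ s.Normal ∧ s.LoopFree

end TensorPaper
namespace TensorPaper

inductive Atom (T ι : Type) : Type
  | e : List T → ι → ι → Atom T ι
  | l : List T → Atom T ι

namespace Atom
variable {T ι : Type}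

def toE : Atom T ι → Expr T ι
  | e w i j => .elem w i j
  | l w => .loop w

def isE : Atom T ι → ℕ
  | e _ _ _ => 1
  | l _ => 0

variable [DecidableEq ι]

def asup : Atom T ι → ι → ℕ
  | e _ _ j, k => if j = k then 1 else 0
  | l _, _ => 0

def asub : Atom T ι → ι → ℕ
  | e _ i _, k => if i = k then 1 else 0
  | l _, _ => 0

end Atom

section Lists
variable {T ι : Type}

def listE (L : List (Atom T ι)) : Expr T ι :=
  (L.map Atom.toE).foldr .mul .one

@[simp] lemma listE_nil : listE ([] : List (Atom T ι)) = .one := rfl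
@[simp] lemma listE_cons (a : Atom T ι) (L : List (Atom T ι)) :
    listE (a :: L) = .mul a.toE (listE L) := rfl

def ecount (L : List (Atom T ι)) : ℕ := (L.map Atom.isE).sum

@[simp] lemma ecount_nil : ecount ([] : List (Atom T ι)) = 0 := rfl
@[simp] lemma ecount_cons (a : Atom T ι) (L : List (Atom T ι)) :
    ecount (a :: L) = a.isE + ecount L := rfl

variable [DecidableEq ι]

def lsup (L : List (Atom T ι)) (k : ι) : ℕ := (L.map (Atom.asup · k)).sum
def lsub (L : List (Atom T ι)) (k : ι) : ℕ := (L.map (Atom.asub · k)).sum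

@[simp] lemma lsup_nil (k : ι) : lsup ([] : List (Atom T ι)) k = 0 := rfl
@[simp] lemma lsub_nil (k : ι) : lsub ([] : List (Atom T ι)) k = 0 := rfl
@[simp] lemma lsup_cons (a : Atom T ι) (L : List (Atom T ι)) (k : ι) :
    lsup (a :: L) k = a.asup k + lsup L k := rfl
@[simp] lemma lsub_cons (a : Atom T ι) (L : List (Atom T ι)) (k : ι) :
    lsub (a :: L) k = a.asub k + lsub L k := rfl

@[simp] lemma supCount_toE (a : Atom T ι) (k : ι) :
    (Atom.toE a).supCount k = a.asup k := by
  cases a <;> simp [Atom.toE, Atom.asup, Expr.supCount]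

@[simp] lemma subCount_toE (a : Atom T ι) (k : ι) :
    (Atom.toE a).subCount k = a.asub k := by
  cases a <;> simp [Atom.toE, Atom.asub, Expr.subCount]

@[simp] lemma supCount_listE (L : List (Atom T ι)) (k : ι) :
    (listE L).supCount k = lsup L k := by
  induction L with
  | nil => rfl
  | cons a L ih =>
      simp only [listE_cons, Expr.supCount, supCount_toE, lsup_cons]
      exact congrArg (a.asup k + ·) ih

@[simp] lemma subCount_listE (L : List (Atom T ι)) (k : ι) :
    (listE L).subCount k = lsub L k := by
  induction L with
  | nil => rfl
  | cons a L ih =>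
      simp only [listE_cons, Expr.subCount, subCount_toE, lsub_cons]
      exact congrArg (a.asub k + ·) ih

lemma asup_le_isE (a : Atom T ι) (k : ι) : a.asup k ≤ a.isE := by
  cases a <;> simp [Atom.asup, Atom.isE] <;> split <;> simp

lemma lsup_le_ecount (L : List (Atom T ι)) (k : ι) : lsup L k ≤ ecount L := by
  induction L with
  | nil => simp
  | cons a L ih => simpa using Nat.add_le_add (asup_le_isE a k) ih

lemma lsup_perm {L L' : List (Atom T ι)} (h : L.Perm L') (k : ι) :
    lsup L k = lsup L' k := (h.map _).sum_eq

lemma lsub_perm {L L' : List (Atom T ι)} (h : L.Perm L') (k : ι) :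
    lsub L k = lsub L' k := (h.map _).sum_eq

lemma ecount_perm {L L' : List (Atom T ι)} (h : L.Perm L') :
    ecount L = ecount L' := (h.map _).sum_eq

end Lists

section CongLemmas
variable {T ι : Type}

lemma cong_listE_append (A B : List (Atom T ι)) :
    Cong (listE (A ++ B)) (.mul (listE A) (listE B)) := by
  induction A with
  | nil => exact (Cong.one_mul _).symm
  | cons a A ih =>
      simpa using ((Cong.mul_congr (Cong.refl a.toE) ih).trans
        (Cong.assoc a.toE (listE A) (listE B)).symm)

lemma cong_listE_perm {L L' : List (Atom T ι)} (h : L.Perm L') :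
    Cong (listE L) (listE L') := by
  induction h with
  | nil => exact Cong.refl _
  | cons a _ ih => exact Cong.mul_congr (Cong.refl _) ih
  | swap a b L =>
      exact ((Cong.assoc _ _ _).symm.trans
        (Cong.mul_congr (Cong.comm _ _) (Cong.refl _))).trans (Cong.assoc _ _ _)
  | trans _ _ ih1 ih2 => exact ih1.trans ih2

def flat : Expr T ι → List (Atom T ι)
  | .one => []
  | .elem w i j => [.e w i j]
  | .loop w => [.l w]
  | .mul t s => flat t ++ flat s

lemma cong_flat (t : Expr T ι) : Cong t (listE (flat t)) := by
  induction t with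
  | one => exact Cong.refl _
  | elem w i j => exact ((Cong.comm _ _).trans (Cong.one_mul _)).symm
  | loop w => exact ((Cong.comm _ _).trans (Cong.one_mul _)).symm
  | mul t s iht ihs =>
      exact (Cong.mul_congr iht ihs).trans (cong_listE_append _ _).symm

lemma lsup_append [DecidableEq ι] (A B : List (Atom T ι)) (k : ι) :
    lsup (A ++ B) k = lsup A k + lsup B k := by simp [lsup]

lemma lsub_append [DecidableEq ι] (A B : List (Atom T ι)) (k : ι) :
    lsub (A ++ B) k = lsub A k + lsub B k := by simp [lsub]

lemma lsup_flat [DecidableEq ι] (t : Expr T ι) (k : ι) :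
    lsup (flat t) k = t.supCount k := by
  induction t with
  | one => rfl
  | elem w i j => simp [flat, lsup, Atom.asup, Expr.supCount]
  | loop w => rfl
  | mul t s iht ihs => simp [flat, lsup_append, Expr.supCount, iht, ihs]

lemma lsub_flat [DecidableEq ι] (t : Expr T ι) (k : ι) :
    lsub (flat t) k = t.subCount k := by
  induction t with
  | one => rfl
  | elem w i j => simp [flat, lsub, Atom.asub, Expr.subCount]
  | loop w => rfl
  | mul t s iht ihs => simp [flat, lsub_append, Expr.subCount, iht, ihs]

end CongLemmas

section Main
variable {T ι : Type} [DecidableEq ι]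

lemma exists_upper {L : List (Atom T ι)} {j : ι} (h : lsup L j ≠ 0) :
    ∃ u i, Atom.e u i j ∈ L := by
  induction L with
  | nil => simp at h
  | cons a L ih =>
      rcases Nat.eq_zero_or_pos (a.asup j) with h0 | hp
      · simp only [lsup_cons, h0, Nat.zero_add] at h
        obtain ⟨u, i, hm⟩ := ih h
        exact ⟨u, i, List.mem_cons_of_mem _ hm⟩
      · cases a with
        | e w i j' =>
            have : j' = j := by
              by_contra hne; simp [Atom.asup, hne] at hp
            exact ⟨w, i, this ▸ List.mem_cons_self⟩
        | l w => simp [Atom.asup] at hp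

lemma exists_lower {L : List (Atom T ι)} {j : ι} (h : lsub L j ≠ 0) :
    ∃ v k, Atom.e v j k ∈ L := by
  induction L with
  | nil => simp at h
  | cons a L ih =>
      rcases Nat.eq_zero_or_pos (a.asub j) with h0 | hp
      · simp only [lsub_cons, h0, Nat.zero_add] at h
        obtain ⟨v, k, hm⟩ := ih h
        exact ⟨v, k, List.mem_cons_of_mem _ hm⟩
      · cases a with
        | e w i' k =>
            have : i' = j := by
              by_contra hne; simp [Atom.asub, hne] at hp
            exact ⟨w, k, this ▸ List.mem_cons_self⟩
        | l w => simp [Atom.asub] at hp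

lemma perm_of_mem {a : Atom T ι} {L : List (Atom T ι)} (h : a ∈ L) :
    ∃ L', L.Perm (a :: L') := by
  obtain ⟨s, t, rfl⟩ := List.append_of_mem h
  exact ⟨s ++ t, List.perm_middle⟩

lemma main (n : ℕ) : ∀ (L : List (Atom T ι)), ecount L ≤ n →
    (∀ k, lsup L k ≤ 1 ∧ lsub L k ≤ 1) →
    ∃ s, Cong (listE L) s ∧ s.Normal := by
  induction n with
  | zero =>
      intro L hn _
      refine ⟨listE L, Cong.refl _, fun k => Or.inl ?_⟩
      have := lsup_le_ecount L k
      simp only [supCount_listE]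
      omega
  | succ n ih =>
      intro L hn hwf
      by_cases hN : (listE L).Normal
      · exact ⟨listE L, Cong.refl _, hN⟩
      · simp only [Expr.Normal] at hN
        push_neg at hN
        obtain ⟨j, hsu, hsb⟩ := hN
        simp only [supCount_listE, subCount_listE] at hsu hsb
        obtain ⟨u, i, hmem⟩ := exists_upper hsu
        obtain ⟨L₁, hP1⟩ := perm_of_mem hmem
        by_cases hij : i = j
        · -- loopify
          subst hij
          have hcong : Cong (listE L) (listE (Atom.l u :: L₁)) :=
            (cong_listE_perm hP1).trans
              (by simpa [Atom.toE] using
                Cong.mul_congr (Cong.loopify u i) (Cong.refl (listE L₁)))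
          have hwf' : ∀ k, lsup (Atom.l u :: L₁) k ≤ 1 ∧ lsub (Atom.l u :: L₁) k ≤ 1 := by
            intro k
            have h1 := (hwf k).1; have h2 := (hwf k).2
            rw [lsup_perm hP1 k] at h1; rw [lsub_perm hP1 k] at h2
            simp only [lsup_cons, lsub_cons, Atom.asup, Atom.asub] at *
            omega
          have hec : ecount (Atom.l u :: L₁) ≤ n := by
            have := ecount_perm hP1
            simp only [ecount_cons, Atom.isE] at this ⊢
            omega
          obtain ⟨s, hc, hns⟩ := ih _ hec hwf'
          exact ⟨s, hcong.trans hc, hns⟩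
        · -- concat
          have hsubL : lsub (Atom.e u i j :: L₁) j = lsub L j := (lsub_perm hP1 j).symm
          have hsub1 : lsub L₁ j ≠ 0 := by
            have h2 := (hwf j).2
            simp only [lsub_cons, Atom.asub, if_neg hij, Nat.zero_add] at hsubL
            omega
          obtain ⟨v, k', hmem2⟩ := exists_lower hsub1
          obtain ⟨L₂, hP2⟩ := perm_of_mem hmem2
          have hjk : j ≠ k' := by
            intro h; subst h
            have h1 := (hwf j).1
            rw [lsup_perm hP1 j] at h1
            have h3 := lsup_perm hP2 j
            simp [lsup_cons, Atom.asup] at h1 h3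
            omega
          have hP : L.Perm (Atom.e u i j :: Atom.e v j k' :: L₂) :=
            hP1.trans (List.Perm.cons _ hP2)
          set c : Atom T ι := Atom.e (u ++ v) i k' with hc
          have hcong : Cong (listE L) (listE (c :: L₂)) := by
            refine (cong_listE_perm hP).trans ?_
            simp only [listE_cons, Atom.toE]
            exact ((Cong.assoc _ _ _).symm.trans
              (Cong.mul_congr (Cong.concat u v i j k' hij hjk) (Cong.refl _)))
          have hwf' : ∀ m, lsup (c :: L₂) m ≤ 1 ∧ lsub (c :: L₂) m ≤ 1 := by
            intro m
            have h1 := (hwf m).1; have h2 := (hwf m).2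
            rw [lsup_perm hP m] at h1; rw [lsub_perm hP m] at h2
            simp only [lsup_cons, lsub_cons, Atom.asup, Atom.asub, hc] at *
            constructor <;> omega
          have hec : ecount (c :: L₂) ≤ n := by
            have := ecount_perm hP
            simp only [ecount_cons, Atom.isE, hc] at this ⊢
            omega
          obtain ⟨s, hcs, hns⟩ := ih _ hec hwf'
          exact ⟨s, hcong.trans hcs, hns⟩

end Main

/-- Every tensor term expression is congruent to a normal one
(one containing no bound indices). -/
theorem stmt2 {T ι : Type} [DecidableEq ι] (t : Expr T ι) (ht : t.WellFormed) :
    ∃ s : Expr T ι, Cong t s ∧ s.Normal := by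
  obtain ⟨s, hc, hn⟩ := main (ecount (flat t)) (flat t) le_rfl
    (fun k => by rw [lsup_flat, lsub_flat]; exact ht k)
  exact ⟨s, (cong_flat t).trans hc, hn⟩

end TensorPaper
end

section
/- In ETTC, the ∇-inversion rule is admissible: if t ⊢ Γ, ∇^α_β A is derivable (where α was a free lower index and β a free upper index of A), then δ^α_β · t ⊢ Γ, A is derivable. -/
set_option autoImplicit false

namespace TensorPaper

/-- Extended tensor types: tensor types together with the binding operators
`nabla a b A` (∇, binding the free lower index `a` and the free upper index `b`
of `A`) and `tri a b A` (△, binding likewise). -/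
inductive ETy (P ι : Type) : Type
  | pos : P → List ι → List ι → ETy P ι
  | neg : P → List ι → List ι → ETy P ι
  | tens : ETy P ι → ETy P ι → ETy P ι
  | par : ETy P ι → ETy P ι → ETy P ι
  | nabla : ι → ι → ETy P ι → ETy P ι
  | tri : ι → ι → ETy P ι → ETy P ι

namespace ETy

variable {P ι : Type}

/-- duality of extended tensor types; it exchanges ∇ and △ -/
def dual : ETy P ι → ETy P ι
  | pos p I J => neg p J.reverse I.reverse
  | neg p I J => pos p J.reverse I.reverse
  | tens A B => par B.dual A.dual
  | par A B => tens B.dual A.dual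
  | nabla a b A => tri b a A.dual
  | tri a b A => nabla b a A.dual

variable [DecidableEq ι]

/-- free upper indices of an extended tensor type -/
def sups : ETy P ι → List ι
  | pos _ I _ => I
  | neg _ I _ => I
  | tens A B => A.sups ++ B.sups
  | par A B => A.sups ++ B.sups
  | nabla _ b A => A.sups.erase b
  | tri _ b A => A.sups.erase b

/-- free lower indices of an extended tensor type -/
def subs : ETy P ι → List ι
  | pos _ _ J => J
  | neg _ _ J => J
  | tens A B => A.subs ++ B.subs
  | par A B => A.subs ++ B.subs
  | nabla a _ A => A.subs.erase a
  | tri a _ A => A.subs.erase a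

end ETy

def ETy.rename {P ι : Type} (f : ι → ι) : ETy P ι → ETy P ι
  | .pos p I J => .pos p (I.map f) (J.map f)
  | .neg p I J => .neg p (I.map f) (J.map f)
  | .tens A B => .tens (A.rename f) (B.rename f)
  | .par A B => .par (A.rename f) (B.rename f)
  | .nabla a b A => .nabla (f a) (f b) (A.rename f)
  | .tri a b A => .tri (f a) (f b) (A.rename f)

end TensorPaper
namespace TensorPaper

/-- Derivability in extended tensor type calculus ETTC.  The flag `lam` imposes
the Lambek restriction (nonempty context) on the (∇) rule; the flag `c` tells
whether the Cut rule is allowed. -/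
inductive EDeriv {T ι P : Type} [DecidableEq ι] (v : P → ℕ × ℕ) (lam c : Bool) :
    Expr T ι → List (ETy P ι) → Prop
  | ax (p : P) (I J I' J' : List ι)
      (hI : I.length = (v p).2) (hJ : J.length = (v p).1)
      (hI' : I'.length = I.length) (hJ' : J'.length = J.length)
      (hnd : (I ++ J ++ I' ++ J').Nodup) :
      EDeriv v lam c (deltasLU (I.reverse ++ J') (I' ++ J.reverse))
        [ETy.neg p I J, ETy.pos p J' I']
  | cut {t s : Expr T ι} {Γ Θ : List (ETy P ι)} {A : ETy P ι} (hc : c = true) :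
      EDeriv v lam c t (Γ ++ [A]) → EDeriv v lam c s (A.dual :: Θ) →
      EDeriv v lam c (.mul t s) (Γ ++ Θ)
  | parR {t : Expr T ι} {Γ : List (ETy P ι)} {A B : ETy P ι} :
      EDeriv v lam c t (Γ ++ [A, B]) → EDeriv v lam c t (Γ ++ [ETy.par A B])
  | tensR {t s : Expr T ι} {Γ Θ : List (ETy P ι)} {A B : ETy P ι} :
      EDeriv v lam c t (Γ ++ [A]) → EDeriv v lam c s (B :: Θ) →
      EDeriv v lam c (.mul t s) (Γ ++ [ETy.tens A B] ++ Θ)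
  | perm {t : Expr T ι} {Γ Δ : List (ETy P ι)} :
      EDeriv v lam c t Γ → Γ.Perm Δ → EDeriv v lam c t Δ
  | congr {t s : Expr T ι} {Γ : List (ETy P ι)} :
      EDeriv v lam c t Γ → Cong t s → EDeriv v lam c s Γ
  | alpha {t : Expr T ι} {Γ : List (ETy P ι)} (f : ι → ι)
      (hf : Function.Injective f) :
      EDeriv v lam c t Γ → EDeriv v lam c (t.rename f) (Γ.map (ETy.rename f))
  | nablaR {t : Expr T ι} {Γ : List (ETy P ι)} {A : ETy P ι} (a b : ι)
      (ha : a ∈ A.subs) (hb : b ∈ A.sups) (hres : lam = true → Γ ≠ []) :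
      EDeriv v lam c (.mul (.elem [] b a) t) (Γ ++ [A]) →
      EDeriv v lam c t (Γ ++ [ETy.nabla a b A])
  | triR {t : Expr T ι} {Γ : List (ETy P ι)} {A : ETy P ι} (a b : ι)
      (ha : a ∈ A.subs) (hb : b ∈ A.sups) :
      EDeriv v lam c t (Γ ++ [A]) →
      EDeriv v lam c (.mul (.elem [] a b) t) (Γ ++ [ETy.tri a b A])

end TensorPaper
namespace TensorPaper

section AuxLemmas

variable {α : Type}

lemma perm_extract_left (l₁ l₂ X : List α) (N : α) :
    ((l₁ ++ N :: l₂) ++ X).Perm (((l₁ ++ l₂) ++ X) ++ [N]) :=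
  (List.perm_middle.append_right X).trans (List.perm_append_singleton N _).symm

lemma perm_extract_right (l X₁ X₂ : List α) (N : α) :
    (l ++ (X₁ ++ N :: X₂)).Perm ((l ++ (X₁ ++ X₂)) ++ [N]) :=
  ((List.perm_middle.append_left l).trans List.perm_middle).trans
    (List.perm_append_singleton N _).symm

lemma perm_extract (l₁ l₂ : List α) (N : α) :
    (l₁ ++ N :: l₂).Perm ((l₁ ++ l₂) ++ [N]) :=
  List.perm_middle.trans (List.perm_append_singleton N _).symm

lemma perm_of_both {Δ Γ L : List α} {N : α} (h1 : Δ.Perm (Γ ++ [N]))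
    (h2 : Δ.Perm (L ++ [N])) : Γ.Perm L :=
  ((List.perm_append_singleton N Γ).symm.trans
    ((h1.symm.trans h2).trans (List.perm_append_singleton N L))).cons_inv

lemma perm_swap_last' (E X : List α) (A : α) :
    ((E ++ X) ++ [A]).Perm ((E ++ [A]) ++ X) := by
  simp only [List.append_assoc]
  exact List.Perm.append_left E List.perm_append_comm

lemma perm_move {E Θ Γ : List α} (h : Γ.Perm (E ++ Θ)) (A : α) :
    ((E ++ [A]) ++ Θ).Perm (Γ ++ [A]) := by
  have h1 : ((E ++ [A]) ++ Θ).Perm ((E ++ Θ) ++ [A]) := by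
    simp only [List.append_assoc]
    exact List.Perm.append_left E List.perm_append_comm
  exact h1.trans (h.symm.append_right [A])

variable {T ι : Type}

lemma cong_swap (d e t : Expr T ι) :
    Cong (.mul d (.mul e t)) (.mul e (.mul d t)) :=
  (Cong.assoc d e t).symm.trans
    ((Cong.mul_congr (Cong.comm d e) (Cong.refl t)).trans (Cong.assoc e d t))

lemma cong_pull_left (d t s : Expr T ι) :
    Cong (.mul (.mul d t) s) (.mul d (.mul t s)) := Cong.assoc d t s

lemma cong_pull_right (t d s : Expr T ι) :
    Cong (.mul t (.mul d s)) (.mul d (.mul t s)) :=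
  (Cong.assoc t d s).symm.trans
    ((Cong.mul_congr (Cong.comm t d) (Cong.refl s)).trans (Cong.assoc d t s))

variable {P : Type} [DecidableEq ι]

lemma rename_subs (f : ι → ι) (hf : Function.Injective f) (A : ETy P ι) :
    (A.rename f).subs = A.subs.map f := by
  induction A <;> simp [ETy.rename, ETy.subs, *, List.map_erase hf]

lemma rename_sups (f : ι → ι) (hf : Function.Injective f) (A : ETy P ι) :
    (A.rename f).sups = A.sups.map f := by
  induction A <;> simp [ETy.rename, ETy.sups, *, List.map_erase hf]

theorem nabla_inv_aux {T : Type} (v : P → ℕ × ℕ) {t : Expr T ι}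
    {Δ : List (ETy P ι)} (h : EDeriv v false true t Δ) :
    ∀ ⦃Γ : List (ETy P ι)⦄ ⦃A : ETy P ι⦄ ⦃a b : ι⦄, a ∈ A.subs → b ∈ A.sups →
      Δ.Perm (Γ ++ [ETy.nabla a b A]) →
      EDeriv v false true (.mul (.elem [] b a) t) (Γ ++ [A]) := by
  induction h with
  | ax p I J I' J' hI hJ hI' hJ' hnd =>
    intro Γ A a b ha hb hperm
    have hmem : ETy.nabla a b A ∈ [ETy.neg p I J, ETy.pos p J' I'] :=
      hperm.mem_iff.2 (by simp)
    simp at hmem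
  | @cut t s Γ₁ Θ C hc h1 h2 IH1 IH2 =>
    intro Γ A a b ha hb hperm
    have hmem : ETy.nabla a b A ∈ Γ₁ ++ Θ := hperm.mem_iff.2 (by simp)
    rcases List.mem_append.mp hmem with hm | hm
    · obtain ⟨L₁, L₂, rfl⟩ := List.append_of_mem hm
      have d1 := IH1 ha hb (perm_extract_left L₁ L₂ [C] (ETy.nabla a b A))
      have d1' := EDeriv.perm d1 (perm_swap_last' (L₁ ++ L₂) [C] A)
      have d2 := EDeriv.cut rfl d1' h2
      refine EDeriv.perm (EDeriv.congr d2 (cong_pull_left _ t s)) ?_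
      exact perm_move (perm_of_both hperm (perm_extract_left L₁ L₂ Θ _)) A
    · obtain ⟨X₁, X₂, rfl⟩ := List.append_of_mem hm
      have hE : (C.dual :: (X₁ ++ ETy.nabla a b A :: X₂)).Perm
          ((C.dual :: (X₁ ++ X₂)) ++ [ETy.nabla a b A]) :=
        perm_extract_right [C.dual] X₁ X₂ _
      have d2 := IH2 ha hb hE
      have d3 := EDeriv.cut rfl h1 (d2 : EDeriv v false true _
        (C.dual :: ((X₁ ++ X₂) ++ [A])))
      simp only [List.append_eq] at d3
      rw [← List.append_assoc] at d3
      refine EDeriv.perm (EDeriv.congr d3 (cong_pull_right t _ s)) ?_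
      exact (perm_of_both hperm (perm_extract_right Γ₁ X₁ X₂ _)).symm.append_right [A]
  | @parR t Γ₁ C B h1 IH =>
    intro Γ A a b ha hb hperm
    have hmem : ETy.nabla a b A ∈ Γ₁ ++ [ETy.par C B] := hperm.mem_iff.2 (by simp)
    have hm : ETy.nabla a b A ∈ Γ₁ := by
      rcases List.mem_append.mp hmem with hm | hm
      · exact hm
      · simp at hm
    obtain ⟨L₁, L₂, rfl⟩ := List.append_of_mem hm
    have d1 := IH ha hb (perm_extract_left L₁ L₂ [C, B] (ETy.nabla a b A))
    have d1' := EDeriv.perm d1 (perm_swap_last' (L₁ ++ L₂) [C, B] A)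
    have d2 := EDeriv.parR (d1' : EDeriv v false true _ (((L₁ ++ L₂) ++ [A]) ++ [C, B]))
    refine EDeriv.perm d2 ?_
    exact perm_move (perm_of_both hperm (perm_extract_left L₁ L₂ [ETy.par C B] _)) A
  | @tensR t s Γ₁ Θ C B h1 h2 IH1 IH2 =>
    intro Γ A a b ha hb hperm
    have hmem : ETy.nabla a b A ∈ Γ₁ ++ [ETy.tens C B] ++ Θ := hperm.mem_iff.2 (by simp)
    rw [List.append_assoc] at hperm
    rcases List.mem_append.mp hmem with hm | hm
    · have hm' : ETy.nabla a b A ∈ Γ₁ := by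
        rcases List.mem_append.mp hm with hm' | hm'
        · exact hm'
        · simp at hm'
      obtain ⟨L₁, L₂, rfl⟩ := List.append_of_mem hm'
      have d1 := IH1 ha hb (perm_extract_left L₁ L₂ [C] (ETy.nabla a b A))
      have d1' := EDeriv.perm d1 (perm_swap_last' (L₁ ++ L₂) [C] A)
      have d2 := EDeriv.tensR d1' h2
      rw [List.append_assoc] at d2
      refine EDeriv.perm (EDeriv.congr d2 (cong_pull_left _ t s)) ?_
      exact perm_move (perm_of_both hperm (perm_extract_left L₁ L₂ _ _)) A
    · obtain ⟨X₁, X₂, rfl⟩ := List.append_of_mem hm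
      have hE : (B :: (X₁ ++ ETy.nabla a b A :: X₂)).Perm
          ((B :: (X₁ ++ X₂)) ++ [ETy.nabla a b A]) :=
        perm_extract_right [B] X₁ X₂ _
      have d2 := IH2 ha hb hE
      have d3 := EDeriv.tensR h1 (d2 : EDeriv v false true _
        (B :: ((X₁ ++ X₂) ++ [A])))
      simp only [List.append_eq, ← List.append_assoc] at d3 hperm
      refine EDeriv.perm (EDeriv.congr d3 (cong_pull_right t _ s)) ?_
      exact (perm_of_both hperm (perm_extract _ X₂ _)).symm.append_right [A]
  | perm h1 hp IH =>
    intro Γ A a b ha hb hperm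
    exact IH ha hb (hp.trans hperm)
  | congr h1 hcg IH =>
    intro Γ A a b ha hb hperm
    exact EDeriv.congr (IH ha hb hperm) (Cong.mul_congr (Cong.refl _) hcg)
  | @alpha t Γ₀ f hf h1 IH =>
    intro Γ A a b ha hb hperm
    have hmem : ETy.nabla a b A ∈ Γ₀.map (ETy.rename f) := hperm.mem_iff.2 (by simp)
    obtain ⟨X, hX, hXN⟩ := List.mem_map.mp hmem
    cases X with
    | pos p I J => simp [ETy.rename] at hXN
    | neg p I J => simp [ETy.rename] at hXN
    | tens A1 A2 => simp [ETy.rename] at hXN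
    | par A1 A2 => simp [ETy.rename] at hXN
    | tri a' b' A' => simp [ETy.rename] at hXN
    | nabla a' b' A' =>
      rw [ETy.rename, ETy.nabla.injEq] at hXN
      obtain ⟨hfa, hfb, hA⟩ := hXN
      have ha' : a' ∈ A'.subs := by
        have : a ∈ (A'.subs).map f := by
          rw [← rename_subs f hf, hA]; exact ha
        obtain ⟨x, hx, hfx⟩ := List.mem_map.mp this
        rwa [← hf (hfx.trans hfa.symm)]
      have hb' : b' ∈ A'.sups := by
        have : b ∈ (A'.sups).map f := by
          rw [← rename_sups f hf, hA]; exact hb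
        obtain ⟨x, hx, hfx⟩ := List.mem_map.mp this
        rwa [← hf (hfx.trans hfb.symm)]
      obtain ⟨L₁, L₂, rfl⟩ := List.append_of_mem hX
      have hE : (L₁ ++ ETy.nabla a' b' A' :: L₂).Perm
          ((L₁ ++ L₂) ++ [ETy.nabla a' b' A']) :=
        List.perm_middle.trans (List.perm_append_singleton _ _).symm
      have d1 := IH ha' hb' hE
      have d2 := EDeriv.alpha f hf d1
      simp only [Expr.rename, List.map_append, List.map_cons, List.map_nil] at d2
      rw [hfa, hfb, hA] at d2
      refine EDeriv.perm d2 ?_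
      have hmap : ((L₁ ++ ETy.nabla a' b' A' :: L₂).map (ETy.rename f)).Perm
          ((L₁.map (ETy.rename f) ++ L₂.map (ETy.rename f)) ++ [ETy.nabla a b A]) := by
        have := hE.map (ETy.rename f)
        simpa [ETy.rename, hfa, hfb, hA, List.map_append] using this
      exact (perm_of_both hperm hmap).symm.append_right [A]
  | @nablaR t Γ₀ A₀ a₀ b₀ ha₀ hb₀ hres h1 IH =>
    intro Γ A a b ha hb hperm
    by_cases hEq : ETy.nabla a b A = ETy.nabla a₀ b₀ A₀
    · rw [ETy.nabla.injEq] at hEq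
      obtain ⟨rfl, rfl, rfl⟩ := hEq
      exact EDeriv.perm h1 ((perm_of_both hperm (List.Perm.refl _)).symm.append_right [A])
    · have hmem : ETy.nabla a b A ∈ Γ₀ ++ [ETy.nabla a₀ b₀ A₀] := hperm.mem_iff.2 (by simp)
      have hm : ETy.nabla a b A ∈ Γ₀ := by
        rcases List.mem_append.mp hmem with hm | hm
        · exact hm
        · simp at hm; exact absurd (by rw [hm.1, hm.2.1, hm.2.2]) hEq
      obtain ⟨L₁, L₂, rfl⟩ := List.append_of_mem hm
      have d1 := IH ha hb (perm_extract_left L₁ L₂ [A₀] (ETy.nabla a b A))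
      have d1' := EDeriv.congr d1 (cong_swap _ _ t)
      have d1'' := EDeriv.perm d1' (perm_swap_last' (L₁ ++ L₂) [A₀] A)
      have d2 := EDeriv.nablaR a₀ b₀ ha₀ hb₀ (by simp) d1''
      refine EDeriv.perm d2 ?_
      exact perm_move (perm_of_both hperm (perm_extract_left L₁ L₂ [ETy.nabla a₀ b₀ A₀] _)) A
  | @triR t Γ₀ A₀ a₀ b₀ ha₀ hb₀ h1 IH =>
    intro Γ A a b ha hb hperm
    have hmem : ETy.nabla a b A ∈ Γ₀ ++ [ETy.tri a₀ b₀ A₀] := hperm.mem_iff.2 (by simp)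
    have hm : ETy.nabla a b A ∈ Γ₀ := by
      rcases List.mem_append.mp hmem with hm | hm
      · exact hm
      · simp at hm
    obtain ⟨L₁, L₂, rfl⟩ := List.append_of_mem hm
    have d1 := IH ha hb (perm_extract_left L₁ L₂ [A₀] (ETy.nabla a b A))
    have d1' := EDeriv.perm d1 (perm_swap_last' (L₁ ++ L₂) [A₀] A)
    have d2 := EDeriv.triR a₀ b₀ ha₀ hb₀ d1'
    refine EDeriv.perm (EDeriv.congr d2 (cong_swap _ _ t)) ?_
    exact perm_move (perm_of_both hperm (perm_extract_left L₁ L₂ [ETy.tri a₀ b₀ A₀] _)) A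

end AuxLemmas

/-- The ∇-inversion rule is admissible in ETTC. -/
theorem stmt15 {T ι P : Type} [DecidableEq ι] (v : P → ℕ × ℕ)
    {t : Expr T ι} {Γ : List (ETy P ι)} {A : ETy P ι} {a b : ι}
    (ha : a ∈ A.subs) (hb : b ∈ A.sups)
    (h : EDeriv v false true t (Γ ++ [ETy.nabla a b A])) :
    EDeriv v false true (.mul (.elem [] b a) t) (Γ ++ [A]) := by
  exact nabla_inv_aux v h ha hb (List.Perm.refl _)

end TensorPaper
end

section
/- In ETTC, for Lambek-style types (valency (1,1)) A and B, the slash-elimination rule is admissible: from t ⊢ Θ, (A\B)^i_j and s ⊢ Γ, A^α_i one can derive δ^α_β · s t ⊢ Γ, B^β_j, Θ, where (A\B)^i_j is defined as ∇^α_β(Ā^i_α ℘ B^β_j). -/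
set_option autoImplicit false

namespace TensorPaper

set_option linter.unusedSectionVars false in
section
set_option maxHeartbeats 1000000
set_option linter.unreachableTactic false
set_option linter.unusedTactic false

-- ===================== auxiliary lemmas =====================

section Aux
variable {T ι P : Type} [DecidableEq ι]

lemma Expr.rename_id : ∀ t : Expr T ι, t.rename id = t
  | .one => rfl
  | .elem _ _ _ => rfl
  | .loop _ => rfl
  | .mul t s => by simp [Expr.rename, Expr.rename_id t, Expr.rename_id s]

lemma Expr.rename_comp (f g : ι → ι) : ∀ t : Expr T ι,
    (t.rename g).rename f = t.rename (f ∘ g)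
  | .one => rfl
  | .elem _ _ _ => rfl
  | .loop _ => rfl
  | .mul t s => by
      simp [Expr.rename, Expr.rename_comp f g t, Expr.rename_comp f g s]

lemma ETy.rename_id : ∀ A : ETy P ι, A.rename id = A
  | .pos _ _ _ => by simp [ETy.rename]
  | .neg _ _ _ => by simp [ETy.rename]
  | .tens A B => by simp [ETy.rename, ETy.rename_id A, ETy.rename_id B]
  | .par A B => by simp [ETy.rename, ETy.rename_id A, ETy.rename_id B]
  | .nabla a b A => by simp [ETy.rename, ETy.rename_id A]
  | .tri a b A => by simp [ETy.rename, ETy.rename_id A]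

lemma ETy.rename_comp (f g : ι → ι) : ∀ A : ETy P ι,
    (A.rename g).rename f = A.rename (f ∘ g)
  | .pos _ _ _ => by simp [ETy.rename]
  | .neg _ _ _ => by simp [ETy.rename]
  | .tens A B => by simp [ETy.rename, ETy.rename_comp f g A, ETy.rename_comp f g B]
  | .par A B => by simp [ETy.rename, ETy.rename_comp f g A, ETy.rename_comp f g B]
  | .nabla a b A => by simp [ETy.rename, ETy.rename_comp f g A]
  | .tri a b A => by simp [ETy.rename, ETy.rename_comp f g A]

lemma ETy.rename_dual (f : ι → ι) : ∀ A : ETy P ι,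
    (A.rename f).dual = A.dual.rename f
  | .pos _ _ _ => by simp [ETy.rename, ETy.dual]
  | .neg _ _ _ => by simp [ETy.rename, ETy.dual]
  | .tens A B => by
      simp [ETy.rename, ETy.dual, ETy.rename_dual f A, ETy.rename_dual f B]
  | .par A B => by
      simp [ETy.rename, ETy.dual, ETy.rename_dual f A, ETy.rename_dual f B]
  | .nabla a b A => by simp [ETy.rename, ETy.dual, ETy.rename_dual f A]
  | .tri a b A => by simp [ETy.rename, ETy.dual, ETy.rename_dual f A]

lemma ETy.sups_rename {f : ι → ι} (hf : Function.Injective f) :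
    ∀ A : ETy P ι, (A.rename f).sups = A.sups.map f
  | .pos _ _ _ => rfl
  | .neg _ _ _ => rfl
  | .tens A B => by
      simp [ETy.rename, ETy.sups, ETy.sups_rename hf A, ETy.sups_rename hf B]
  | .par A B => by
      simp [ETy.rename, ETy.sups, ETy.sups_rename hf A, ETy.sups_rename hf B]
  | .nabla a b A => by
      simp [ETy.rename, ETy.sups, ETy.sups_rename hf A, ← List.map_erase hf]
  | .tri a b A => by
      simp [ETy.rename, ETy.sups, ETy.sups_rename hf A, ← List.map_erase hf]

lemma ETy.subs_rename {f : ι → ι} (hf : Function.Injective f) :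
    ∀ A : ETy P ι, (A.rename f).subs = A.subs.map f
  | .pos _ _ _ => rfl
  | .neg _ _ _ => rfl
  | .tens A B => by
      simp [ETy.rename, ETy.subs, ETy.subs_rename hf A, ETy.subs_rename hf B]
  | .par A B => by
      simp [ETy.rename, ETy.subs, ETy.subs_rename hf A, ETy.subs_rename hf B]
  | .nabla a b A => by
      simp [ETy.rename, ETy.subs, ETy.subs_rename hf A, ← List.map_erase hf]
  | .tri a b A => by
      simp [ETy.rename, ETy.subs, ETy.subs_rename hf A, ← List.map_erase hf]

lemma Cong.rename_inj {f : ι → ι} (hf : Function.Injective f)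
    {t s : Expr T ι} (h : Cong t s) : Cong (t.rename f) (s.rename f) := by
  induction h with
  | refl t => exact .refl _
  | symm _ ih => exact ih.symm
  | trans _ _ ih₁ ih₂ => exact ih₁.trans ih₂
  | mul_congr _ _ ih₁ ih₂ => exact ih₁.mul_congr ih₂
  | assoc t s u => exact .assoc _ _ _
  | comm t s => exact .comm _ _
  | one_mul t => exact .one_mul _
  | concat u v i j k hij hjk =>
      exact .concat u v (f i) (f j) (f k) (fun h => hij (hf h)) (fun h => hjk (hf h))
  | loopify u i => exact .loopify u (f i)
  | rot a w => exact .rot a w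

lemma cong_swap_s17 (a b c : Expr T ι) :
    Cong (.mul a (.mul b c)) (.mul b (.mul a c)) :=
  ((Cong.assoc a b c).symm.trans
    ((Cong.comm a b).mul_congr (Cong.refl c))).trans (Cong.assoc b a c)

lemma cong_A (Q s t1 t2 : Expr T ι) :
    Cong (.mul (.mul Q (.mul s t1)) t2) (.mul Q (.mul s (.mul t1 t2))) :=
  (Cong.assoc Q (.mul s t1) t2).trans
    ((Cong.refl Q).mul_congr (Cong.assoc s t1 t2))

lemma cong_B (Q s t1 t2 : Expr T ι) :
    Cong (.mul t1 (.mul Q (.mul s t2))) (.mul Q (.mul s (.mul t1 t2))) :=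
  (cong_swap_s17 t1 Q (.mul s t2)).trans
    ((Cong.refl Q).mul_congr (cong_swap_s17 t1 s t2))

lemma cong_C (Q s E t0 : Expr T ι) :
    Cong (.mul Q (.mul s (.mul E t0))) (.mul E (.mul Q (.mul s t0))) :=
  ((Cong.refl Q).mul_congr (cong_swap_s17 s E t0)).trans (cong_swap_s17 Q E (.mul s t0))

end Aux

-- ===================== par inversion =====================

section ParInv
variable {T ι P : Type} [DecidableEq ι] {v : P → ℕ × ℕ} {lam c : Bool}

lemma parInv {u : Expr T ι} {Δ : List (ETy P ι)}
    (h : EDeriv v lam c u Δ) :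
    ∀ ⦃A B : ETy P ι⦄ ⦃Θ : List (ETy P ι)⦄, Δ.Perm (ETy.par A B :: Θ) →
      EDeriv v lam c u (A :: B :: Θ) := by
  classical
  induction h with
  | ax p I J I' J' hI hJ hI' hJ' hnd =>
      intro A B Θ hp
      have hmem : ETy.par A B ∈ [ETy.neg p I J, ETy.pos p J' I'] :=
        hp.symm.subset List.mem_cons_self
      simp at hmem
  | cut hc h1 h2 ih1 ih2 =>
      rename_i t s Γc Θc Ac
      intro A B Θ hp
      have hmem : ETy.par A B ∈ Γc ++ Θc := hp.symm.subset List.mem_cons_self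
      rcases List.mem_append.1 hmem with hm | hm
      · obtain ⟨S1, S2, rfl⟩ := List.append_of_mem hm
        have h1' := ih1 (A := A) (B := B) (Θ := (S1 ++ S2) ++ [Ac]) (by
          refine List.perm_iff_count.2 fun x => ?_
          simp [List.count_append, List.count_cons]
          all_goals omega)
        have h1'' : EDeriv v lam c t ((A :: B :: (S1 ++ S2)) ++ [Ac]) := by
          simpa [List.append_assoc] using h1'
        refine (EDeriv.cut hc h1'' h2).perm ?_
        refine List.perm_iff_count.2 fun x => ?_
        have hc1 := hp.count_eq x
        simp [List.count_append, List.count_cons] at hc1 ⊢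
        omega
      · obtain ⟨S1, S2, rfl⟩ := List.append_of_mem hm
        have h2' := ih2 (A := A) (B := B) (Θ := Ac.dual :: (S1 ++ S2)) (by
          refine List.perm_iff_count.2 fun x => ?_
          simp [List.count_append, List.count_cons]
          all_goals omega)
        have h2'' : EDeriv v lam c s (Ac.dual :: (A :: B :: (S1 ++ S2))) := by
          refine h2'.perm ?_
          refine List.perm_iff_count.2 fun x => ?_
          simp [List.count_append, List.count_cons]
          all_goals omega
        refine (EDeriv.cut hc h1 h2'').perm ?_
        refine List.perm_iff_count.2 fun x => ?_
        have hc1 := hp.count_eq x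
        simp [List.count_append, List.count_cons] at hc1 ⊢
        omega
  | parR h0 ih =>
      rename_i t Γp A' B'
      intro A B Θ hp
      by_cases hv : ETy.par A' B' = ETy.par A B
      · obtain ⟨rfl, rfl⟩ : A' = A ∧ B' = B := by
          injection hv with h1 h2; exact ⟨h1, h2⟩
        refine h0.perm ?_
        refine List.perm_iff_count.2 fun x => ?_
        have hc1 := hp.count_eq x
        simp [List.count_append, List.count_cons] at hc1 ⊢
        omega
      · have hmem : ETy.par A B ∈ Γp := by
          have := hp.symm.subset List.mem_cons_self
          rcases List.mem_append.1 this with hm | hm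
          · exact hm
          · rw [List.mem_singleton] at hm; exact absurd hm.symm hv
        obtain ⟨S1, S2, rfl⟩ := List.append_of_mem hmem
        have h0' := ih (A := A) (B := B) (Θ := (S1 ++ S2) ++ [A', B']) (by
          refine List.perm_iff_count.2 fun x => ?_
          simp [List.count_append, List.count_cons]
          all_goals omega)
        have h0'' : EDeriv v lam c t ((A :: B :: (S1 ++ S2)) ++ [A', B']) := by
          simpa [List.append_assoc] using h0'
        refine (EDeriv.parR h0'').perm ?_
        refine List.perm_iff_count.2 fun x => ?_
        have hc1 := hp.count_eq x
        simp [List.count_append, List.count_cons] at hc1 ⊢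
        omega
  | tensR h1 h2 ih1 ih2 =>
      rename_i t s Γt Θt A' B'
      intro A B Θ hp
      have hmem : ETy.par A B ∈ Γt ++ [ETy.tens A' B'] ++ Θt :=
        hp.symm.subset List.mem_cons_self
      have hmem' : ETy.par A B ∈ Γt ∨ ETy.par A B ∈ Θt := by
        rcases List.mem_append.1 hmem with hm | hm
        · rcases List.mem_append.1 hm with hm' | hm'
          · exact Or.inl hm'
          · simp at hm'
        · exact Or.inr hm
      rcases hmem' with hm | hm
      · obtain ⟨S1, S2, rfl⟩ := List.append_of_mem hm
        have h1' := ih1 (A := A) (B := B) (Θ := (S1 ++ S2) ++ [A']) (by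
          refine List.perm_iff_count.2 fun x => ?_
          simp [List.count_append, List.count_cons]
          all_goals omega)
        have h1'' : EDeriv v lam c t ((A :: B :: (S1 ++ S2)) ++ [A']) := by
          simpa [List.append_assoc] using h1'
        refine (EDeriv.tensR h1'' h2).perm ?_
        refine List.perm_iff_count.2 fun x => ?_
        have hc1 := hp.count_eq x
        simp [List.count_append, List.count_cons] at hc1 ⊢
        omega
      · obtain ⟨S1, S2, rfl⟩ := List.append_of_mem hm
        have h2' := ih2 (A := A) (B := B) (Θ := B' :: (S1 ++ S2)) (by
          refine List.perm_iff_count.2 fun x => ?_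
          simp [List.count_append, List.count_cons]
          all_goals omega)
        have h2'' : EDeriv v lam c s (B' :: (A :: B :: (S1 ++ S2))) := by
          refine h2'.perm ?_
          refine List.perm_iff_count.2 fun x => ?_
          simp [List.count_append, List.count_cons]
          all_goals omega
        refine (EDeriv.tensR h1 h2'').perm ?_
        refine List.perm_iff_count.2 fun x => ?_
        have hc1 := hp.count_eq x
        simp [List.count_append, List.count_cons] at hc1 ⊢
        omega
  | perm h0 hq ih =>
      intro A B Θ hp
      exact ih ((hq.trans hp))
  | congr h0 hcong ih =>
      intro A B Θ hp
      exact (ih hp).congr hcong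
  | alpha g hg h0 ih =>
      rename_i t Δ₀
      intro A B Θ hp
      have hmem : ETy.par A B ∈ Δ₀.map (ETy.rename g) :=
        hp.symm.subset List.mem_cons_self
      obtain ⟨Z, hZmem, hZ⟩ := List.mem_map.1 hmem
      obtain ⟨A₀, B₀, rfl, hA₀, hB₀⟩ :
          ∃ A₀ B₀, Z = ETy.par A₀ B₀ ∧ ETy.rename g A₀ = A ∧ ETy.rename g B₀ = B := by
        cases Z <;> simp [ETy.rename] at hZ
        · exact ⟨_, _, rfl, hZ.1, hZ.2⟩
      obtain ⟨S1, S2, rfl⟩ := List.append_of_mem hZmem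
      have h0' := ih (A := A₀) (B := B₀) (Θ := S1 ++ S2) (by
        refine List.perm_iff_count.2 fun x => ?_
        simp [List.count_append, List.count_cons]
        all_goals omega)
      have h0'' := h0'.alpha g hg
      refine h0''.perm ?_
      refine List.perm_iff_count.2 fun x => ?_
      have hc1 := hp.count_eq x
      simp [List.count_append, List.count_cons, hZ, hA₀, hB₀] at hc1 ⊢
      omega
  | nablaR a₀ b₀ ha hb hres h0 ih =>
      rename_i t Γn A₀
      intro A B Θ hp
      have hmem : ETy.par A B ∈ Γn := by
        have := hp.symm.subset List.mem_cons_self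
        rcases List.mem_append.1 this with hm | hm
        · exact hm
        · simp at hm
      obtain ⟨S1, S2, rfl⟩ := List.append_of_mem hmem
      have h0' := ih (A := A) (B := B) (Θ := (S1 ++ S2) ++ [A₀]) (by
        refine List.perm_iff_count.2 fun x => ?_
        simp [List.count_append, List.count_cons]
        all_goals omega)
      have h0'' : EDeriv v lam c (.mul (.elem [] b₀ a₀) t)
          ((A :: B :: (S1 ++ S2)) ++ [A₀]) := by
        simpa [List.append_assoc] using h0'
      refine (EDeriv.nablaR a₀ b₀ ha hb (fun _ => by simp) h0'').perm ?_
      refine List.perm_iff_count.2 fun x => ?_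
      have hc1 := hp.count_eq x
      simp [List.count_append, List.count_cons] at hc1 ⊢
      omega
  | triR a₁ b₁ ha hb h0 ih =>
      rename_i t Γr A₁
      intro A B Θ hp
      have hmem : ETy.par A B ∈ Γr := by
        have := hp.symm.subset List.mem_cons_self
        rcases List.mem_append.1 this with hm | hm
        · exact hm
        · simp at hm
      obtain ⟨S1, S2, rfl⟩ := List.append_of_mem hmem
      have h0' := ih (A := A) (B := B) (Θ := (S1 ++ S2) ++ [A₁]) (by
        refine List.perm_iff_count.2 fun x => ?_
        simp [List.count_append, List.count_cons]
        all_goals omega)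
      have h0'' : EDeriv v lam c t ((A :: B :: (S1 ++ S2)) ++ [A₁]) := by
        simpa [List.append_assoc] using h0'
      refine (EDeriv.triR a₁ b₁ ha hb h0'').perm ?_
      refine List.perm_iff_count.2 fun x => ?_
      have hc1 := hp.count_eq x
      simp [List.count_append, List.count_cons] at hc1 ⊢
      omega

end ParInv

-- ===================== main lemma =====================

section Main
variable {T ι P : Type} [DecidableEq ι] {v : P → ℕ × ℕ}

lemma slashMain {t : Expr T ι} {Δ : List (ETy P ι)}
    (h : EDeriv v false true t Δ) :
    ∀ (f : ι → ι), Function.Injective f →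
    ∀ ⦃a' b' : ι⦄ ⦃X Y : ETy P ι⦄ ⦃Θ : List (ETy P ι)⦄,
      (Δ.map (ETy.rename f)).Perm (ETy.nabla a' b' (ETy.par X.dual Y) :: Θ) →
    ∀ ⦃s : Expr T ι⦄ ⦃Γ : List (ETy P ι)⦄, EDeriv v false true s (Γ ++ [X]) →
    EDeriv v false true (.mul (.elem [] b' a') (.mul s (t.rename f)))
      (Γ ++ [Y] ++ Θ) := by
  classical
  induction h with
  | ax p I J I' J' hI hJ hI' hJ' hnd =>
      intro f hf a' b' X Y Θ hp s Γ hs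
      have hmem : ETy.nabla a' b' (ETy.par X.dual Y) ∈
          ([ETy.neg p I J, ETy.pos p J' I'].map (ETy.rename f)) :=
        hp.symm.subset List.mem_cons_self
      simp [ETy.rename] at hmem
  | cut hc h1 h2 ih1 ih2 =>
      rename_i t₁ s₁ Γc Θc Ac
      intro f hf a' b' X Y Θ hp s Γ hs
      have hmem : ETy.nabla a' b' (ETy.par X.dual Y) ∈ (Γc.map (ETy.rename f)) ++ (Θc.map (ETy.rename f)) := by
        have := hp.symm.subset List.mem_cons_self
        simpa using this
      rcases List.mem_append.1 hmem with hm | hm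
      · obtain ⟨Z, hZmem, hZ⟩ := List.mem_map.1 hm
        obtain ⟨S1, S2, rfl⟩ := List.append_of_mem hZmem
        have W1 := ih1 f hf (a' := a') (b' := b') (X := X) (Y := Y)
          (Θ := (S1.map (ETy.rename f) ++ S2.map (ETy.rename f)) ++ [Ac.rename f]) (by
            refine List.perm_iff_count.2 fun x => ?_
            simp [List.count_append, List.count_cons, hZ]
            omega) hs
        have W1' : EDeriv v false true
            (.mul (.elem [] b' a') (.mul s (t₁.rename f)))
            ((Γ ++ [Y] ++ (S1.map (ETy.rename f) ++ S2.map (ETy.rename f)))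
              ++ [Ac.rename f]) := by
          simpa [List.append_assoc] using W1
        have W2 : EDeriv v false true (s₁.rename f)
            ((Ac.rename f).dual :: Θc.map (ETy.rename f)) := by
          have := h2.alpha f hf
          simpa [ETy.rename_dual] using this
        refine ((EDeriv.cut rfl W1' W2).congr ?_).perm ?_
        · exact cong_A _ _ _ _
        · refine List.perm_iff_count.2 fun x => ?_
          have hc1 := hp.count_eq x
          simp [List.count_append, List.count_cons, hZ] at hc1 ⊢
          omega
      · obtain ⟨Z, hZmem, hZ⟩ := List.mem_map.1 hm
        obtain ⟨S1, S2, rfl⟩ := List.append_of_mem hZmem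
        have W2 := ih2 f hf (a' := a') (b' := b') (X := X) (Y := Y)
          (Θ := (Ac.dual.rename f) :: (S1.map (ETy.rename f) ++ S2.map (ETy.rename f))) (by
            refine List.perm_iff_count.2 fun x => ?_
            simp [List.count_append, List.count_cons, hZ]
            omega) hs
        have W2' : EDeriv v false true
            (.mul (.elem [] b' a') (.mul s (s₁.rename f)))
            ((Ac.rename f).dual ::
              (Γ ++ [Y] ++ (S1.map (ETy.rename f) ++ S2.map (ETy.rename f)))) := by
          rw [ETy.rename_dual]
          refine W2.perm ?_
          refine List.perm_iff_count.2 fun x => ?_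
          simp [List.count_append, List.count_cons]
          all_goals omega
        have W1 : EDeriv v false true (t₁.rename f)
            ((Γc.map (ETy.rename f)) ++ [Ac.rename f]) := by
          have := h1.alpha f hf
          simpa using this
        refine ((EDeriv.cut rfl W1 W2').congr ?_).perm ?_
        · exact cong_B _ _ _ _
        · refine List.perm_iff_count.2 fun x => ?_
          have hc1 := hp.count_eq x
          simp [List.count_append, List.count_cons, hZ] at hc1 ⊢
          omega
  | parR h0 ih =>
      rename_i t₀ Γp A₀ B₀
      intro f hf a' b' X Y Θ hp s Γ hs
      have hmem : ETy.nabla a' b' (ETy.par X.dual Y) ∈ Γp.map (ETy.rename f) := by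
        have := hp.symm.subset List.mem_cons_self
        simp only [List.map_append] at this
        rcases List.mem_append.1 this with hm | hm
        · exact hm
        · simp [ETy.rename] at hm
      obtain ⟨Z, hZmem, hZ⟩ := List.mem_map.1 hmem
      obtain ⟨S1, S2, rfl⟩ := List.append_of_mem hZmem
      have W := ih f hf (a' := a') (b' := b') (X := X) (Y := Y)
        (Θ := (S1.map (ETy.rename f) ++ S2.map (ETy.rename f))
            ++ [A₀.rename f, B₀.rename f]) (by
          refine List.perm_iff_count.2 fun x => ?_
          simp [List.count_append, List.count_cons, hZ]
          omega) hs
      have W' : EDeriv v false true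
          (.mul (.elem [] b' a') (.mul s (t₀.rename f)))
          ((Γ ++ [Y] ++ (S1.map (ETy.rename f) ++ S2.map (ETy.rename f)))
            ++ [A₀.rename f, B₀.rename f]) := by
        simpa [List.append_assoc] using W
      refine (EDeriv.parR W').perm ?_
      refine List.perm_iff_count.2 fun x => ?_
      have hc1 := hp.count_eq x
      simp [List.count_append, List.count_cons, hZ, ETy.rename] at hc1 ⊢
      omega
  | tensR h1 h2 ih1 ih2 =>
      rename_i t₁ s₁ Γt Θt A₀ B₀
      intro f hf a' b' X Y Θ hp s Γ hs
      have hmem : ETy.nabla a' b' (ETy.par X.dual Y) ∈ Γt.map (ETy.rename f) ∨ ETy.nabla a' b' (ETy.par X.dual Y) ∈ Θt.map (ETy.rename f) := by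
        have := hp.symm.subset List.mem_cons_self
        simp only [List.map_append] at this
        rcases List.mem_append.1 this with hm | hm
        · rcases List.mem_append.1 hm with hm' | hm'
          · exact Or.inl hm'
          · simp [ETy.rename] at hm'
        · exact Or.inr hm
      rcases hmem with hm | hm
      · obtain ⟨Z, hZmem, hZ⟩ := List.mem_map.1 hm
        obtain ⟨S1, S2, rfl⟩ := List.append_of_mem hZmem
        have W1 := ih1 f hf (a' := a') (b' := b') (X := X) (Y := Y)
          (Θ := (S1.map (ETy.rename f) ++ S2.map (ETy.rename f)) ++ [A₀.rename f]) (by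
            refine List.perm_iff_count.2 fun x => ?_
            simp [List.count_append, List.count_cons, hZ]
            omega) hs
        have W1' : EDeriv v false true
            (.mul (.elem [] b' a') (.mul s (t₁.rename f)))
            ((Γ ++ [Y] ++ (S1.map (ETy.rename f) ++ S2.map (ETy.rename f)))
              ++ [A₀.rename f]) := by
          simpa [List.append_assoc] using W1
        have W2 : EDeriv v false true (s₁.rename f)
            ((B₀.rename f) :: Θt.map (ETy.rename f)) := by
          have := h2.alpha f hf
          simpa using this
        refine ((EDeriv.tensR W1' W2).congr ?_).perm ?_
        · exact cong_A _ _ _ _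
        · refine List.perm_iff_count.2 fun x => ?_
          have hc1 := hp.count_eq x
          simp [List.count_append, List.count_cons, hZ, ETy.rename] at hc1 ⊢
          omega
      · obtain ⟨Z, hZmem, hZ⟩ := List.mem_map.1 hm
        obtain ⟨S1, S2, rfl⟩ := List.append_of_mem hZmem
        have W2 := ih2 f hf (a' := a') (b' := b') (X := X) (Y := Y)
          (Θ := (B₀.rename f) :: (S1.map (ETy.rename f) ++ S2.map (ETy.rename f))) (by
            refine List.perm_iff_count.2 fun x => ?_
            simp [List.count_append, List.count_cons, hZ]
            omega) hs
        have W2' : EDeriv v false true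
            (.mul (.elem [] b' a') (.mul s (s₁.rename f)))
            ((B₀.rename f) ::
              (Γ ++ [Y] ++ (S1.map (ETy.rename f) ++ S2.map (ETy.rename f)))) := by
          refine W2.perm ?_
          refine List.perm_iff_count.2 fun x => ?_
          simp [List.count_append, List.count_cons]
          all_goals omega
        have W1 : EDeriv v false true (t₁.rename f)
            ((Γt.map (ETy.rename f)) ++ [A₀.rename f]) := by
          have := h1.alpha f hf
          simpa using this
        refine ((EDeriv.tensR W1 W2').congr ?_).perm ?_
        · exact cong_B _ _ _ _
        · refine List.perm_iff_count.2 fun x => ?_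
          have hc1 := hp.count_eq x
          simp [List.count_append, List.count_cons, hZ, ETy.rename] at hc1 ⊢
          omega
  | perm h0 hq ih =>
      intro f hf a' b' X Y Θ hp s Γ hs
      exact ih f hf ((hq.map (ETy.rename f)).trans hp) hs
  | congr h0 hcong ih =>
      intro f hf a' b' X Y Θ hp s Γ hs
      exact (ih f hf hp hs).congr
        ((Cong.refl _).mul_congr ((Cong.refl s).mul_congr (hcong.rename_inj hf)))
  | alpha g hg h0 ih =>
      rename_i t₀ Δ₀
      intro f hf a' b' X Y Θ hp s Γ hs
      have hp' : (Δ₀.map (ETy.rename (f ∘ g))).Perm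
          (ETy.nabla a' b' (ETy.par X.dual Y) :: Θ) := by
        have : (Δ₀.map (ETy.rename g)).map (ETy.rename f)
            = Δ₀.map (ETy.rename (f ∘ g)) := by
          rw [List.map_map]
          exact List.map_congr_left fun x _ => ETy.rename_comp f g x
        rwa [this] at hp
      have W := ih (f ∘ g) (hf.comp hg) hp' hs
      rwa [← Expr.rename_comp f g t₀] at W
  | nablaR a₀ b₀ ha hb hres h0 ih =>
      rename_i t₀ Γn A₀
      intro f hf a' b' X Y Θ hp s Γ hs
      by_cases hv : ETy.rename f (ETy.nabla a₀ b₀ A₀) = ETy.nabla a' b' (ETy.par X.dual Y)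
      · -- the key case: this nabla is (a rename of) the slash formula
        have hv' : f a₀ = a' ∧ f b₀ = b' ∧ ETy.rename f A₀ = ETy.par X.dual Y := by
          simpa [ETy.rename] using hv
        obtain ⟨ha', hb', hA₀⟩ := hv'
        obtain ⟨U, V, rfl, hU, hV⟩ :
            ∃ U V, A₀ = ETy.par U V ∧ ETy.rename f U = X.dual
              ∧ ETy.rename f V = Y := by
          cases A₀ <;> simp [ETy.rename] at hA₀
          · exact ⟨_, _, rfl, hA₀.1, hA₀.2⟩
        have W0 : EDeriv v false true (.mul (.elem [] b₀ a₀) t₀)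
            (U :: V :: Γn) := by
          refine parInv h0 ?_
          refine List.perm_iff_count.2 fun x => ?_
          simp [List.count_append, List.count_cons]
          all_goals omega
        have W1 := W0.alpha f hf
        have W1' : EDeriv v false true
            (.mul (.elem [] (f b₀) (f a₀)) (t₀.rename f))
            (X.dual :: ((Y :: Γn.map (ETy.rename f)))) := by
          simpa [Expr.rename, hU, hV] using W1
        have W2 := EDeriv.cut rfl hs W1'
        rw [ha', hb'] at W2
        refine (W2.congr (cong_swap_s17 _ _ _)).perm ?_
        refine List.perm_iff_count.2 fun x => ?_
        have hc1 := hp.count_eq x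
        simp [List.count_append, List.count_cons, hv] at hc1 ⊢
        omega
      · have hmem : ETy.nabla a' b' (ETy.par X.dual Y) ∈ Γn.map (ETy.rename f) := by
          have := hp.symm.subset List.mem_cons_self
          simp only [List.map_append] at this
          rcases List.mem_append.1 this with hm | hm
          · exact hm
          · rw [List.map_singleton, List.mem_singleton] at hm
            exact absurd hm.symm hv
        obtain ⟨Z, hZmem, hZ⟩ := List.mem_map.1 hmem
        obtain ⟨S1, S2, rfl⟩ := List.append_of_mem hZmem
        have W := ih f hf (a' := a') (b' := b') (X := X) (Y := Y)
          (Θ := (S1.map (ETy.rename f) ++ S2.map (ETy.rename f)) ++ [A₀.rename f]) (by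
            refine List.perm_iff_count.2 fun x => ?_
            simp [List.count_append, List.count_cons, hZ]
            omega) hs
        have W' : EDeriv v false true
            (.mul (.elem [] (f b₀) (f a₀))
              (.mul (.elem [] b' a') (.mul s (t₀.rename f))))
            ((Γ ++ [Y] ++ (S1.map (ETy.rename f) ++ S2.map (ETy.rename f)))
              ++ [A₀.rename f]) := by
          refine (W.congr ?_).perm ?_
          · exact (cong_C _ _ _ _)
          · refine List.perm_iff_count.2 fun x => ?_
            simp [List.count_append, List.count_cons]
            all_goals omega
        have hsub : f a₀ ∈ (A₀.rename f).subs := by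
          rw [ETy.subs_rename hf]; exact List.mem_map_of_mem ha
        have hsup : f b₀ ∈ (A₀.rename f).sups := by
          rw [ETy.sups_rename hf]; exact List.mem_map_of_mem hb
        have W'' := EDeriv.nablaR (v := v) (lam := false) (c := true)
          (f a₀) (f b₀) hsub hsup (fun h => by simp at h) W'
        refine W''.perm ?_
        refine List.perm_iff_count.2 fun x => ?_
        have hc1 := hp.count_eq x
        simp [List.count_append, List.count_cons, hZ, ETy.rename] at hc1 ⊢
        omega
  | triR a₁ b₁ ha hb h0 ih =>
      rename_i t₁ Γr A₁
      intro f hf a' b' X Y Θ hp s Γ hs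
      have hmem : ETy.nabla a' b' (ETy.par X.dual Y) ∈ Γr.map (ETy.rename f) := by
        have := hp.symm.subset List.mem_cons_self
        simp only [List.map_append] at this
        rcases List.mem_append.1 this with hm | hm
        · exact hm
        · simp [ETy.rename] at hm
      obtain ⟨Z, hZmem, hZ⟩ := List.mem_map.1 hmem
      obtain ⟨S1, S2, rfl⟩ := List.append_of_mem hZmem
      have W := ih f hf (a' := a') (b' := b') (X := X) (Y := Y)
        (Θ := (S1.map (ETy.rename f) ++ S2.map (ETy.rename f)) ++ [A₁.rename f]) (by
          refine List.perm_iff_count.2 fun x => ?_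
          simp [List.count_append, List.count_cons, hZ]
          omega) hs
      have W' : EDeriv v false true
          (.mul (.elem [] b' a') (.mul s (t₁.rename f)))
          ((Γ ++ [Y] ++ (S1.map (ETy.rename f) ++ S2.map (ETy.rename f)))
            ++ [A₁.rename f]) := by
        simpa [List.append_assoc] using W
      have hsub : f a₁ ∈ (A₁.rename f).subs := by
        rw [ETy.subs_rename hf]; exact List.mem_map_of_mem ha
      have hsup : f b₁ ∈ (A₁.rename f).sups := by
        rw [ETy.sups_rename hf]; exact List.mem_map_of_mem hb
      have W'' := EDeriv.triR (f a₁) (f b₁) hsub hsup W'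
      refine (W''.congr ?_).perm ?_
      · exact (cong_C _ _ _ _).symm
      · refine List.perm_iff_count.2 fun x => ?_
        have hc1 := hp.count_eq x
        simp [List.count_append, List.count_cons, hZ, ETy.rename] at hc1 ⊢
        omega

end Main

end

/-- Slash elimination for Lambek-style types is admissible in ETTC:
from `t ⊢ Θ, (A\B)^i_j` and `s ⊢ Γ, A^α_i` one derives
`δ^α_β·st ⊢ Γ, B^β_j, Θ`, with `(A\B)^i_j = ∇^α_β(Ā^i_α ℘ B^β_j)`. -/
theorem stmt17 {T ι P : Type} [DecidableEq ι] (v : P → ℕ × ℕ)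
    (A B : ι → ι → ETy P ι)
    (hA : ∀ u l, (A u l).sups = [u] ∧ (A u l).subs = [l])
    (hB : ∀ u l, (B u l).sups = [u] ∧ (B u l).subs = [l])
    (i j a b : ι) (hd : ([i, j, a, b] : List ι).Nodup)
    (t s : Expr T ι) (Θ Γ : List (ETy P ι))
    (h₁ : EDeriv v false true t
      (Θ ++ [ETy.nabla a b (ETy.par ((A a i).dual) (B b j))]))
    (h₂ : EDeriv v false true s (Γ ++ [A a i])) :
    EDeriv v false true (.mul (.elem [] b a) (.mul s t))
      (Γ ++ [B b j] ++ Θ) := by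
  classical
  have hmap : (Θ ++ [ETy.nabla a b (ETy.par ((A a i).dual) (B b j))]).map
      (ETy.rename id) = Θ ++ [ETy.nabla a b (ETy.par ((A a i).dual) (B b j))] := by
    have hfun : (ETy.rename (P := P) (ι := ι) id) = id := funext ETy.rename_id
    simp [hfun]
  have hp : ((Θ ++ [ETy.nabla a b (ETy.par ((A a i).dual) (B b j))]).map
      (ETy.rename id)).Perm
      (ETy.nabla a b (ETy.par ((A a i).dual) (B b j)) :: Θ) := by
    rw [hmap]
    simpa using
      (List.perm_middle (a := ETy.nabla a b (ETy.par ((A a i).dual) (B b j)))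
        (l₁ := Θ) (l₂ := []))
  have W := slashMain h₁ id Function.injective_id hp h₂
  simpa [Expr.rename_id] using W

end TensorPaper
end
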